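/- Let X be a compactum. A functional ν : C(X) → ℝ is an idempotent measure on X if and only if there exists a possibility capacity c on X such that ν(φ) = max{φ(x) + ln(c({x})) : x ∈ X} for every φ ∈ C(X) (the maximum computed in ℝ ∪ {-∞} with ln(0) = -∞; it is attained and finite). -/

import Mathlib

/-- An idempotent (Maslov) probability measure on `X`:
a functional on `C(X, ℝ)` preserving constants, translation by constants,
and finite maxima. -/
def IsIdempotentMeasure {X : Type*} [TopologicalSpace X] (μ : C(X, ℝ) → ℝ) : Prop :=
  μ 1 = 1 ∧
  (∀ (l : ℝ) (φ : C(X, ℝ)), μ (ContinuousMap.const X l + φ) = l + μ φ) ∧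
  (∀ ψ φ : C(X, ℝ), μ (ψ ⊔ φ) = max (μ ψ) (μ φ))
/-- An (upper-semicontinuous) capacity on a compactum `X`: a `[0,1]`-valued,
monotone, normalized set function on closed sets, upper semicontinuous in the
sense that if `ν(F) < a` then there is an open `O ⊇ F` with `ν(B) < a` for every
closed `B ⊆ O`. -/
def IsCapacity {X : Type*} [TopologicalSpace X] (ν : Set X → ℝ) : Prop :=
  ν Set.univ = 1 ∧ ν ∅ = 0 ∧
  (∀ F : Set X, IsClosed F → 0 ≤ ν F ∧ ν F ≤ 1) ∧
  (∀ F G : Set X, IsClosed F → IsClosed G → F ⊆ G → ν F ≤ ν G) ∧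
  (∀ (F : Set X) (a : ℝ), IsClosed F → ν F < a →
    ∃ O : Set X, IsOpen O ∧ F ⊆ O ∧ ∀ B : Set X, IsClosed B → B ⊆ O → ν B < a)

/-- A possibility capacity: a capacity with `ν(A ∪ B) = max(ν(A), ν(B))`
for all closed `A`, `B`. -/
def IsPossibilityCapacity {X : Type*} [TopologicalSpace X] (ν : Set X → ℝ) : Prop :=
  IsCapacity ν ∧
  ∀ A B : Set X, IsClosed A → IsClosed B → ν (A ∪ B) = max (ν A) (ν B)
open Classical in
/-- The exponential `[-∞,0] → [0,1]`, with `exp(-∞) = 0`. -/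
noncomputable def myExp (a : EReal) : ℝ :=
  if a = ⊥ then 0 else Real.exp a.toReal

open Classical in
/-- The logarithm `[0,1] → [-∞,0]`, with `ln(0) = -∞`. -/
noncomputable def myLog (r : ℝ) : EReal :=
  if r ≤ 0 then ⊥ else (Real.log r : EReal)


set_option linter.unusedSectionVars false
lemma myExp_nonneg (a : EReal) : 0 ≤ myExp a := by
  unfold myExp; split
  · exact le_rfl
  · exact (Real.exp_pos _).le

lemma myExp_le_one {a : EReal} (h : a ≤ 0) : myExp a ≤ 1 := by
  unfold myExp; split
  · exact zero_le_one
  · rename_i hb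
    rw [← Real.exp_zero]
    refine Real.exp_le_exp.2 ?_
    have : a ≤ ((0:ℝ):EReal) := by exact_mod_cast h
    exact le_trans (EReal.toReal_le_toReal this hb (by simp)) (by simp)

lemma myExp_bot : myExp ⊥ = 0 := by simp [myExp]

lemma myExp_ne_bot {a : EReal} (h : a ≠ ⊥) : myExp a = Real.exp a.toReal := by
  simp [myExp, h]

lemma myLog_myExp {a : EReal} (h : a ≤ 0) : myLog (myExp a) = a := by
  by_cases hb : a = ⊥
  · simp [hb, myExp_bot, myLog]
  · rw [myExp_ne_bot hb]
    rw [myLog, if_neg (not_le.2 (Real.exp_pos _)), Real.log_exp]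
    have ht : a ≠ ⊤ := by
      intro h'; rw [h'] at h; exact absurd h (by simp)
    exact EReal.coe_toReal ht hb

lemma myExp_lt_iff {a : EReal} {t : ℝ} (ha : a ≤ 0) (ht : 0 < t) :
    myExp a < t ↔ a < ((Real.log t : ℝ) : EReal) := by
  by_cases hb : a = ⊥
  · simp [hb, myExp_bot, ht, EReal.bot_lt_coe]
  · rw [myExp_ne_bot hb]
    have ht' : a ≠ ⊤ := fun h' => by rw [h'] at ha; exact absurd ha (by simp)
    rw [← EReal.coe_toReal ht' hb, EReal.coe_lt_coe_iff]
    exact (Real.lt_log_iff_exp_lt ht).symm  -- guess name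

set_option linter.unusedSectionVars false
section Helpers
lemma ereal_add_le_iff (a b : ℝ) (c : EReal) :
    (a:EReal) + c ≤ (b:EReal) ↔ c ≤ ((b - a:ℝ):EReal) := by
  induction c using EReal.rec with
  | bot => rw [EReal.add_bot]; exact iff_of_true bot_le bot_le
  | coe r => norm_cast; constructor <;> intro <;> linarith
  | top =>
      rw [EReal.add_top_of_ne_bot (EReal.coe_ne_bot a)]
      exact iff_of_false (EReal.coe_lt_top b).not_ge (EReal.coe_lt_top (b - a)).not_ge

lemma ereal_add_lt_iff (a b : ℝ) (c : EReal) :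
    (a:EReal) + c < (b:EReal) ↔ c < ((b - a:ℝ):EReal) := by
  induction c using EReal.rec with
  | bot => rw [EReal.add_bot]; exact iff_of_true (EReal.bot_lt_coe b) (EReal.bot_lt_coe (b-a))
  | coe r => norm_cast; constructor <;> intro <;> linarith
  | top =>
      rw [EReal.add_top_of_ne_bot (EReal.coe_ne_bot a)]
      exact iff_of_false ((EReal.coe_lt_top b).trans_le le_top).not_gt
        ((EReal.coe_lt_top (b-a)).trans_le le_top).not_gt

lemma ereal_add_lt_add (a u v : ℝ) (c : EReal) (h1 : a < u) (h2 : c < (v:EReal)) :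
    (a:EReal) + c < ((u + v:ℝ):EReal) := by
  induction c using EReal.rec with
  | bot => rw [EReal.add_bot]; exact EReal.bot_lt_coe _
  | coe r => norm_cast at h2 ⊢; linarith
  | top => exact absurd h2 (by simp)
end Helpers

section Forward
variable {X : Type*} [TopologicalSpace X] [CompactSpace X] [T2Space X]
  (ν : C(X, ℝ) → ℝ)

variable (hν : IsIdempotentMeasure ν)
include hν

lemma nu_zero : ν 0 = 0 := by
  have h := hν.2.1 1 0
  have : ContinuousMap.const X 1 + 0 = (1 : C(X,ℝ)) := by ext x; simp
  rw [this, hν.1] at h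
  linarith

lemma nu_mono {φ ψ : C(X,ℝ)} (h : φ ≤ ψ) : ν φ ≤ ν ψ := by
  have h2 := hν.2.2 φ ψ
  rw [sup_eq_right.2 h] at h2
  rw [h2]; exact le_max_left _ _

lemma X_nonempty : Nonempty X := by
  by_contra h
  have : ContinuousMap.const X 1 + 1 = (1 : C(X,ℝ)) := by
    ext x; exact absurd ⟨x⟩ h
  have h2 := hν.2.1 1 1
  rw [this, hν.1] at h2
  linarith

end Forward

section Dens
variable {X : Type*} [TopologicalSpace X] [CompactSpace X] [T2Space X]

noncomputable def dens (ν : C(X, ℝ) → ℝ) (x : X) : EReal :=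
  ⨅ φ : {φ : C(X, ℝ) // φ x = 0}, ((ν φ.1 : ℝ) : EReal)

variable (ν : C(X, ℝ) → ℝ)

lemma dens_le_nu {ψ : C(X,ℝ)} {x : X} (h : ψ x = 0) : dens ν x ≤ ((ν ψ : ℝ) : EReal) :=
  iInf_le (fun φ : {φ : C(X, ℝ) // φ x = 0} => ((ν φ.1 : ℝ) : EReal)) ⟨ψ, h⟩

variable (hν : IsIdempotentMeasure ν)
include hν

lemma dens_nonpos (x : X) : dens ν x ≤ 0 := by
  have := dens_le_nu ν (ψ := 0) (x := x) rfl
  simpa [nu_zero ν hν] using this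

lemma dens_le (φ : C(X,ℝ)) (x : X) : ((φ x : ℝ) : EReal) + dens ν x ≤ ((ν φ : ℝ) : EReal) := by
  have hmem : (ContinuousMap.const X (-(φ x)) + φ) x = 0 := by simp
  have h1 : dens ν x ≤ ((ν (ContinuousMap.const X (-(φ x)) + φ) : ℝ) : EReal) :=
    dens_le_nu ν hmem
  rw [hν.2.1] at h1
  rw [ereal_add_le_iff]
  convert h1 using 2
  ring

lemma dens_usc (t : ℝ) : IsOpen {x : X | dens ν x < (t : EReal)} := by
  rw [isOpen_iff_forall_mem_open]
  intro x₀ hx₀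
  simp only [Set.mem_setOf_eq] at hx₀
  obtain ⟨ψ, hψ⟩ := iInf_lt_iff.1 hx₀
  have hψt : ν ψ.1 < t := by exact_mod_cast hψ
  refine ⟨(fun y => ψ.1 y) ⁻¹' Set.Ioi (ν ψ.1 - t), ?_, ?_, ?_⟩
  · intro y hy
    simp only [Set.mem_preimage, Set.mem_Ioi] at hy
    have hmem : (ContinuousMap.const X (-(ψ.1 y)) + ψ.1) y = 0 := by simp
    have h1 : dens ν y ≤ ((ν (ContinuousMap.const X (-(ψ.1 y)) + ψ.1) : ℝ) : EReal) :=
      dens_le_nu ν hmem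
    rw [hν.2.1] at h1
    refine lt_of_le_of_lt h1 ?_
    exact_mod_cast by linarith
  · exact IsOpen.preimage ψ.1.continuous isOpen_Ioi
  · simp [Set.mem_preimage, ψ.2]; linarith

end Dens

section Attain
variable {X : Type*} [TopologicalSpace X] [CompactSpace X] [T2Space X]

/-- sup of an EReal-valued function with open strict sublevel sets is attained,
provided the sup is a real number. -/
lemma exists_max_of_usc [Nonempty X] (g : X → EReal)
    (hg : ∀ t : ℝ, IsOpen {x : X | g x < (t : EReal)}) (s : ℝ)
    (hs : (⨆ x, g x) = ((s:ℝ) : EReal)) : ∃ x, g x = (s : EReal) := by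
  set K : ℕ → Set X := fun n => {x : X | ((s - 1/(n+1) : ℝ) : EReal) ≤ g x} with hK
  have hKc : ∀ n, IsClosed (K n) := by
    intro n
    have : K n = {x : X | g x < ((s - 1/(n+1) : ℝ) : EReal)}ᶜ := by
      ext x; simp [hK, not_lt]
    rw [this]; exact (hg _).isClosed_compl
  have hKne : ∀ n, (K n).Nonempty := by
    intro n
    have hlt : ((s - 1/(n+1) : ℝ) : EReal) < ⨆ x, g x := by
      rw [hs]
      have : (s - 1/(n+1) : ℝ) < s := by
        have : (0:ℝ) < 1/(n+1) := by positivity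
        linarith
      exact_mod_cast this
    obtain ⟨x, hx⟩ := lt_iSup_iff.1 hlt
    exact ⟨x, hx.le⟩
  have hKmono : ∀ n, K (n+1) ⊆ K n := by
    intro n x hx
    simp only [hK, Set.mem_setOf_eq] at hx ⊢
    refine le_trans ?_ hx
    have h1 : (0:ℝ) < (n:ℝ)+1 := by positivity
    have h2 : (0:ℝ) < (n:ℝ)+1+1 := by positivity
    have : (s - 1/((n:ℝ)+1) : ℝ) ≤ s - 1/((n:ℝ)+1+1) := by
      rw [sub_le_sub_iff_left, div_le_div_iff₀ h2 h1]
      linarith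
    refine EReal.coe_le_coe_iff.2 ?_
    push_cast
    convert this using 2 <;> push_cast <;> ring
  obtain ⟨x, hx⟩ := IsCompact.nonempty_iInter_of_sequence_nonempty_isCompact_isClosed
    K hKmono hKne ((hKc 0).isCompact) hKc
  refine ⟨x, le_antisymm (le_trans (le_iSup g x) hs.le) ?_⟩
  by_contra h
  push_neg at h
  obtain ⟨u, hu1, hu2⟩ := EReal.exists_between_coe_real h
  have hu2' : u < s := by exact_mod_cast hu2
  obtain ⟨n, hn⟩ := exists_nat_one_div_lt (show (0:ℝ) < s - u by linarith)
  have hxn : ((s - 1/(n+1) : ℝ) : EReal) ≤ g x := by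
    have := Set.mem_iInter.1 hx n
    exact this
  have hreal : u < s - 1/((n:ℝ)+1) := by
    have : (1:ℝ)/((n:ℝ)+1) < s - u := by exact_mod_cast hn
    linarith
  have : (u : EReal) < ((s - 1/((n:ℝ)+1) : ℝ) : EReal) := EReal.coe_lt_coe_iff.2 hreal
  exact absurd (lt_of_lt_of_le this hxn) (not_lt.2 hu1.le)

end Attain

section Rep
variable {X : Type*} [TopologicalSpace X] [CompactSpace X] [T2Space X]
  (ν : C(X, ℝ) → ℝ) (hν : IsIdempotentMeasure ν)
include hν

lemma g_usc (φ : C(X,ℝ)) (t : ℝ) :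
    IsOpen {x : X | ((φ x : ℝ) : EReal) + dens ν x < (t : EReal)} := by
  rw [isOpen_iff_forall_mem_open]
  intro x₀ hx₀
  simp only [Set.mem_setOf_eq] at hx₀
  have hd : dens ν x₀ < ((t - φ x₀ : ℝ) : EReal) := (ereal_add_lt_iff _ _ _).1 hx₀
  obtain ⟨m, hm1, hm2⟩ := EReal.exists_between_coe_real hd
  have hm2' : m < t - φ x₀ := by exact_mod_cast hm2
  set ε : ℝ := (t - φ x₀ - m)/2 with hε
  have hεpos : 0 < ε := by rw [hε]; linarith
  refine ⟨{y : X | dens ν y < (m : EReal)} ∩ (fun y => φ y) ⁻¹' Set.Iio (φ x₀ + ε),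
    ?_, (dens_usc ν hν m).inter (IsOpen.preimage φ.continuous isOpen_Iio), ?_⟩
  · rintro y ⟨hy1, hy2⟩
    simp only [Set.mem_preimage, Set.mem_Iio] at hy2
    simp only [Set.mem_setOf_eq]
    have := ereal_add_lt_add (φ y) (φ x₀ + ε) m (dens ν y) hy2 hy1
    refine lt_of_lt_of_le this ?_
    have : φ x₀ + ε + m ≤ t := by rw [hε]; linarith
    exact_mod_cast this
  · exact ⟨hm1, by simpa using hεpos⟩

lemma nu_rep (φ : C(X,ℝ)) :
    ((ν φ : ℝ) : EReal) = ⨆ x : X, (((φ x : ℝ) : EReal) + dens ν x) := by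
  have hle : (⨆ x : X, (((φ x : ℝ) : EReal) + dens ν x)) ≤ ((ν φ : ℝ) : EReal) :=
    iSup_le (fun x => dens_le ν hν φ x)
  refine le_antisymm ?_ hle
  by_contra hcon
  push_neg at hcon
  obtain ⟨r, hr1, hr2⟩ := EReal.exists_between_coe_real hcon
  have hr2' : r < ν φ := by exact_mod_cast hr2
  -- choose for each x a test function
  have hP : ∀ x : X, ∃ ψ : C(X,ℝ), ψ x = 0 ∧ ν ψ < r - φ x := by
    intro x
    have h1 : ((φ x : ℝ) : EReal) + dens ν x < (r : EReal) :=
      lt_of_le_of_lt (le_iSup (fun x : X => ((φ x : ℝ) : EReal) + dens ν x) x) hr1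
    have h2 : dens ν x < ((r - φ x : ℝ) : EReal) := (ereal_add_lt_iff _ _ _).1 h1
    obtain ⟨ψ, hψ⟩ := iInf_lt_iff.1 h2
    exact ⟨ψ.1, ψ.2, by exact_mod_cast hψ⟩
  choose ψ hψ0 hψν using hP
  set ε : X → ℝ := fun x => (r - φ x - ν (ψ x))/2 with hε
  have hεpos : ∀ x, 0 < ε x := fun x => by
    have := hψν x; rw [hε]; dsimp only; linarith
  set χ : X → C(X,ℝ) := fun x => ContinuousMap.const X (φ x + ε x) + ψ x with hχ
  have hνχ : ∀ x, ν (χ x) < r := by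
    intro x
    rw [hχ]; dsimp only
    rw [hν.2.1]
    have := hψν x
    rw [hε]; dsimp only; linarith
  set U : X → Set X := fun x => {y : X | φ y < (χ x) y} with hU
  have hUopen : ∀ x, IsOpen (U x) := fun x => isOpen_lt φ.continuous (χ x).continuous
  have hUmem : ∀ x, x ∈ U x := by
    intro x
    simp only [hU, hχ, Set.mem_setOf_eq, ContinuousMap.add_apply,
      ContinuousMap.const_apply, hψ0 x]
    linarith [hεpos x]
  have hcover : Set.univ ⊆ ⋃ x, U x := fun y _ => Set.mem_iUnion.2 ⟨y, hUmem y⟩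
  obtain ⟨t, ht⟩ := isCompact_univ.elim_finite_subcover U hUopen hcover
  have hXne : Nonempty X := X_nonempty ν hν
  obtain ⟨y⟩ := hXne
  have htne : t.Nonempty := by
    obtain ⟨i, hi, -⟩ := Set.mem_iUnion₂.1 (ht (Set.mem_univ y))
    exact ⟨i, hi⟩
  set χtot : C(X,ℝ) := t.sup' htne χ with hχtot
  have hφle : φ ≤ χtot := by
    intro z
    obtain ⟨i, hi, hz⟩ := Set.mem_iUnion₂.1 (ht (Set.mem_univ z))
    have h1 : φ z < (χ i) z := hz
    have h2 : (χ i) z ≤ χtot z := by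
      rw [hχtot, ContinuousMap.sup'_apply]
      exact Finset.le_sup' (f := fun j => (χ j) z) hi
    exact le_of_lt (lt_of_lt_of_le h1 h2)
  have hsup : ν χtot = t.sup' htne (fun i => ν (χ i)) := by
    have := map_finset_sup' (⟨ν, hν.2.2⟩ : SupHom C(X,ℝ) ℝ) htne χ
    exact this
  have hlt : ν χtot < r := by
    rw [hsup, Finset.sup'_lt_iff]
    intro i _
    exact hνχ i
  exact absurd (lt_of_le_of_lt (nu_mono ν hν hφle) hlt) (not_lt.2 hr2'.le)

lemma nu_rep_attain (φ : C(X,ℝ)) :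
    ∃ x₀ : X, ((ν φ : ℝ) : EReal) = ((φ x₀ : ℝ) : EReal) + dens ν x₀ := by
  have hXne : Nonempty X := X_nonempty ν hν
  obtain ⟨x₀, hx₀⟩ := exists_max_of_usc (fun x => ((φ x : ℝ) : EReal) + dens ν x)
    (g_usc ν hν φ) (ν φ) (nu_rep ν hν φ).symm
  exact ⟨x₀, hx₀.symm⟩

lemma exists_dens_zero : ∃ x : X, dens ν x = 0 := by
  obtain ⟨x₀, hx₀⟩ := nu_rep_attain ν hν 0
  refine ⟨x₀, ?_⟩
  rw [nu_zero ν hν] at hx₀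
  simpa using hx₀.symm

end Rep

section AttainReal
variable {X : Type*} [TopologicalSpace X] [CompactSpace X] [T2Space X]

lemma exists_max_on_of_usc_real (h : X → ℝ) (hh : ∀ t : ℝ, IsOpen {x : X | h x < t})
    (B : Set X) (hB : IsClosed B) (hBne : B.Nonempty) (hbd : ∀ x ∈ B, h x ≤ 1) :
    ∃ x ∈ B, ∀ y ∈ B, h y ≤ h x := by
  have hbdd : BddAbove (h '' B) := ⟨1, by rintro _ ⟨y, hy, rfl⟩; exact hbd y hy⟩
  set s : ℝ := sSup (h '' B) with hs
  set K : ℕ → Set X := fun n => B ∩ {x : X | s - 1/(n+1) ≤ h x} with hK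
  have hKc : ∀ n, IsClosed (K n) := by
    intro n
    refine hB.inter ?_
    have : {x : X | s - 1/((n:ℝ)+1) ≤ h x} = {x : X | h x < s - 1/((n:ℝ)+1)}ᶜ := by
      ext x; simp [not_lt]
    rw [this]; exact (hh _).isClosed_compl
  have hKne : ∀ n, (K n).Nonempty := by
    intro n
    have hlt : s - 1/((n:ℝ)+1) < s := by
      have : (0:ℝ) < 1/((n:ℝ)+1) := by positivity
      linarith
    obtain ⟨_, ⟨y, hy, rfl⟩, hy2⟩ := exists_lt_of_lt_csSup (hBne.image h) hlt
    exact ⟨y, hy, hy2.le⟩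
  have hKmono : ∀ n, K (n+1) ⊆ K n := by
    rintro n x ⟨hx1, hx2⟩
    refine ⟨hx1, ?_⟩
    simp only [Set.mem_setOf_eq] at hx2 ⊢
    have h1 : (0:ℝ) < (n:ℝ)+1 := by positivity
    have h2 : (0:ℝ) < (n:ℝ)+1+1 := by positivity
    have hcast : ((n+1 : ℕ) : ℝ) + 1 = (n:ℝ)+1+1 := by push_cast; ring
    rw [hcast] at hx2
    have : (1:ℝ)/((n:ℝ)+1+1) ≤ 1/((n:ℝ)+1) := by
      rw [div_le_div_iff₀ h2 h1]; linarith
    linarith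
  obtain ⟨x, hx⟩ := IsCompact.nonempty_iInter_of_sequence_nonempty_isCompact_isClosed
    K hKmono hKne ((hKc 0).isCompact) hKc
  have hxB : x ∈ B := (Set.mem_iInter.1 hx 0).1
  refine ⟨x, hxB, ?_⟩
  have hxs : s ≤ h x := by
    by_contra hcon
    push_neg at hcon
    obtain ⟨n, hn⟩ := exists_nat_one_div_lt (show (0:ℝ) < s - h x by linarith)
    have := (Set.mem_iInter.1 hx n).2
    simp only [Set.mem_setOf_eq] at this
    have hcast : ((n : ℕ) : ℝ) + 1 = (n:ℝ)+1 := by push_cast; ring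
    linarith
  intro y hy
  exact le_trans (le_csSup hbdd ⟨y, hy, rfl⟩) hxs

end AttainReal

section Cap
variable {X : Type*} [TopologicalSpace X] [CompactSpace X] [T2Space X]
  (ν : C(X, ℝ) → ℝ)

noncomputable def capOf (F : Set X) : ℝ :=
  sSup (insert 0 ((fun x => myExp (dens ν x)) '' F))

variable (hν : IsIdempotentMeasure ν)
include hν

lemma capOf_bddAbove (F : Set X) :
    BddAbove (insert 0 ((fun x => myExp (dens ν x)) '' F)) := by
  refine ⟨1, ?_⟩
  rintro r (rfl | ⟨y, -, rfl⟩)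
  · exact zero_le_one
  · exact myExp_le_one (dens_nonpos ν hν y)

lemma capOf_nonneg (F : Set X) : 0 ≤ capOf ν F :=
  le_csSup (capOf_bddAbove ν hν F) (Set.mem_insert _ _)

lemma capOf_le_one (F : Set X) : capOf ν F ≤ 1 := by
  refine csSup_le ⟨0, Set.mem_insert _ _⟩ ?_
  rintro r (rfl | ⟨y, -, rfl⟩)
  · exact zero_le_one
  · exact myExp_le_one (dens_nonpos ν hν y)

lemma capOf_le_of_mem {F : Set X} {x : X} (hx : x ∈ F) : myExp (dens ν x) ≤ capOf ν F :=
  le_csSup (capOf_bddAbove ν hν F) (Set.mem_insert_of_mem _ ⟨x, hx, rfl⟩)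

omit hν in
lemma capOf_empty : capOf ν ∅ = 0 := by
  simp [capOf, csSup_singleton]

lemma capOf_singleton (x : X) : capOf ν {x} = myExp (dens ν x) := by
  rw [capOf, Set.image_singleton]
  rw [csSup_pair]
  exact max_eq_right (myExp_nonneg _)

lemma capOf_univ : capOf ν Set.univ = 1 := by
  obtain ⟨x, hx⟩ := exists_dens_zero ν hν
  refine le_antisymm (capOf_le_one ν hν _) ?_
  have := capOf_le_of_mem ν hν (Set.mem_univ x)
  rw [hx] at this
  simpa [myExp, EReal.toReal_zero] using this

omit hν in
lemma capOf_mono {F G : Set X} (hFG : F ⊆ G) (hG : BddAbove (insert 0 ((fun x => myExp (dens ν x)) '' G))) :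
    capOf ν F ≤ capOf ν G :=
  csSup_le_csSup hG ⟨0, Set.mem_insert _ _⟩
    (Set.insert_subset_insert (Set.image_mono hFG))

lemma capOf_union (A B : Set X) : capOf ν (A ∪ B) = max (capOf ν A) (capOf ν B) := by
  rw [capOf, capOf, capOf, Set.image_union]
  rw [show insert (0:ℝ) ((fun x => myExp (dens ν x)) '' A ∪ (fun x => myExp (dens ν x)) '' B)
      = (insert 0 ((fun x => myExp (dens ν x)) '' A)) ∪ (insert 0 ((fun x => myExp (dens ν x)) '' B)) by
    simp [Set.insert_union, Set.union_insert]]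
  exact csSup_union (capOf_bddAbove ν hν A) ⟨0, Set.mem_insert _ _⟩
    (capOf_bddAbove ν hν B) ⟨0, Set.mem_insert _ _⟩

lemma myExpDens_usc (t : ℝ) : IsOpen {x : X | myExp (dens ν x) < t} := by
  rcases le_or_gt t 0 with ht | ht
  · have : {x : X | myExp (dens ν x) < t} = ∅ := by
      ext x
      simp only [Set.mem_setOf_eq, Set.mem_empty_iff_false, iff_false, not_lt]
      exact le_trans ht (myExp_nonneg _)
    rw [this]; exact isOpen_empty
  · have : {x : X | myExp (dens ν x) < t} = {x : X | dens ν x < ((Real.log t : ℝ) : EReal)} := by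
      ext x
      simp only [Set.mem_setOf_eq]
      exact myExp_lt_iff (dens_nonpos ν hν x) ht
    rw [this]; exact dens_usc ν hν _

lemma capOf_usc (F : Set X) (a : ℝ) (hF : IsClosed F) (ha : capOf ν F < a) :
    ∃ O : Set X, IsOpen O ∧ F ⊆ O ∧ ∀ B : Set X, IsClosed B → B ⊆ O → capOf ν B < a := by
  have ha0 : 0 < a := lt_of_le_of_lt (capOf_nonneg ν hν F) ha
  rcases lt_or_ge 1 a with h1a | h1a
  · exact ⟨Set.univ, isOpen_univ, Set.subset_univ _,
      fun B _ _ => lt_of_le_of_lt (capOf_le_one ν hν B) h1a⟩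
  · refine ⟨{x : X | myExp (dens ν x) < a}, myExpDens_usc ν hν a, ?_, ?_⟩
    · intro x hx
      exact lt_of_le_of_lt (capOf_le_of_mem ν hν hx) ha
    · intro B hB hBO
      rcases B.eq_empty_or_nonempty with rfl | hBne
      · rw [capOf_empty]; exact ha0
      · obtain ⟨x, hxB, hxmax⟩ := exists_max_on_of_usc_real (fun x => myExp (dens ν x))
          (myExpDens_usc ν hν) B hB hBne (fun y _ => myExp_le_one (dens_nonpos ν hν y))
        have hxa : myExp (dens ν x) < a := hBO hxB
        refine lt_of_le_of_lt ?_ hxa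
        refine csSup_le ⟨0, Set.mem_insert _ _⟩ ?_
        rintro r (rfl | ⟨y, hy, rfl⟩)
        · exact myExp_nonneg _
        · exact hxmax y hy

lemma myLog_capOf_singleton (x : X) : myLog (capOf ν {x}) = dens ν x := by
  rw [capOf_singleton ν hν]
  exact myLog_myExp (dens_nonpos ν hν x)

end Cap

section Reverse
variable {X : Type*} [TopologicalSpace X] [CompactSpace X] [T2Space X]

lemma poss_finset_union {c : Set X → ℝ} (hc : IsPossibilityCapacity c) {ι : Type*} (s : Finset ι)
    (hs : s.Nonempty) (C : ι → Set X) (hC : ∀ i, IsClosed (C i)) :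
    c (⋃ i ∈ s, C i) ≤ s.sup' hs (fun i => c (C i)) := by
  induction hs using Finset.Nonempty.cons_induction with
  | singleton i => simp
  | cons i s hi hs ih =>
      have hunion : (⋃ j ∈ Finset.cons i s hi, C j) = C i ∪ (⋃ j ∈ s, C j) := by
        simp [Set.biUnion_insert]
      rw [hunion, hc.2 _ _ (hC i) (isClosed_biUnion_finset (fun j _ => hC j)),
        Finset.sup'_cons (H := hs)]
      exact max_le_max le_rfl ih

lemma poss_sup_singletons {c : Set X → ℝ} (hc : IsPossibilityCapacity c) [Nonempty X]
    {ε : ℝ} (hε : 0 < ε) : ∃ x : X, 1 - ε < c {x} := by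
  by_contra hcon
  push_neg at hcon
  set a : ℝ := 1 - ε/2 with ha
  have hOs : ∀ x : X, ∃ O : Set X, IsOpen O ∧ {x} ⊆ O ∧
      ∀ B : Set X, IsClosed B → B ⊆ O → c B < a := by
    intro x
    refine hc.1.2.2.2.2 {x} a isClosed_singleton ?_
    exact lt_of_le_of_lt (hcon x) (by rw [ha]; linarith)
  choose O hOopen hOmem hOprop using hOs
  have hcover : Set.univ ⊆ ⋃ x, O x :=
    fun y _ => Set.mem_iUnion.2 ⟨y, hOmem y rfl⟩
  obtain ⟨t, ht⟩ := isCompact_univ.elim_finite_subcover O hOopen hcover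
  obtain ⟨y⟩ := ‹Nonempty X›
  have htne : t.Nonempty := by
    obtain ⟨i, hi, -⟩ := Set.mem_iUnion₂.1 (ht (Set.mem_univ y))
    exact ⟨i, hi⟩
  -- shrink the cover to a closed cover
  have hcover' : Set.univ ⊆ ⋃ i : {i // i ∈ t}, O i.1 := by
    intro z hz
    obtain ⟨i, hi, hzi⟩ := Set.mem_iUnion₂.1 (ht hz)
    exact Set.mem_iUnion.2 ⟨⟨i, hi⟩, hzi⟩
  obtain ⟨v, hvcover, hvopen, hvsub⟩ :=
    exists_subset_iUnion_closure_subset (isClosed_univ (X := X))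
      (fun i : {i // i ∈ t} => hOopen i.1) (fun x _ => Set.toFinite _) hcover'
  have huniv : (⋃ i ∈ (Finset.univ : Finset {i // i ∈ t}), closure (v i)) = Set.univ := by
    refine Set.eq_univ_of_univ_subset ?_
    intro z hz
    obtain ⟨i, hzi⟩ := Set.mem_iUnion.1 (hvcover hz)
    exact Set.mem_biUnion (Finset.mem_univ i) (subset_closure hzi)
  have htne' : (Finset.univ : Finset {i // i ∈ t}).Nonempty := by
    obtain ⟨i, hi⟩ := htne
    exact ⟨⟨i, hi⟩, Finset.mem_univ _⟩
  have hle := poss_finset_union hc Finset.univ htne' (fun i => closure (v i))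
    (fun i => isClosed_closure)
  rw [huniv, hc.1.1] at hle
  have : ∀ i : {i // i ∈ t}, c (closure (v i)) < a :=
    fun i => hOprop i.1 _ isClosed_closure (hvsub i)
  have hlt : (Finset.univ : Finset {i // i ∈ t}).sup' htne'
      (fun i => c (closure (v i))) < a := by
    rw [Finset.sup'_lt_iff]
    exact fun i _ => this i
  have : (1:ℝ) < a := lt_of_le_of_lt hle hlt
  rw [ha] at this
  linarith

end Reverse

lemma myLog_nonpos {r : ℝ} (h : r ≤ 1) : myLog r ≤ 0 := by
  unfold myLog; split
  · exact bot_le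
  · rename_i hr
    push_neg at hr
    have : Real.log r ≤ 0 := Real.log_nonpos hr.le h
    exact_mod_cast this


/-- A functional `ν : C(X) → ℝ` on a compactum `X` is an idempotent
measure if and only if there is a possibility capacity `c` on `X` such that
`ν(φ) = max{φ(x) + ln c({x}) : x ∈ X}` for every `φ ∈ C(X)` (computed in
`ℝ ∪ {-∞}` with `ln(0) = -∞`; the maximum is attained and finite). -/
theorem stmt17 {X : Type*} [TopologicalSpace X] [CompactSpace X] [T2Space X]
    (ν : C(X, ℝ) → ℝ) :
    IsIdempotentMeasure ν ↔
      ∃ c : Set X → ℝ, IsPossibilityCapacity c ∧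
        ∀ φ : C(X, ℝ),
          ((ν φ : ℝ) : EReal) = (⨆ x : X, ((φ x : EReal) + myLog (c {x}))) ∧
          ∃ x₀ : X, (⨆ x : X, ((φ x : EReal) + myLog (c {x}))) =
              (φ x₀ : EReal) + myLog (c {x₀}) := by
  constructor
  · intro hν
    refine ⟨capOf ν, ⟨⟨capOf_univ ν hν, capOf_empty ν,
      fun F _ => ⟨capOf_nonneg ν hν F, capOf_le_one ν hν F⟩,
      fun F G _ _ h => capOf_mono ν h (capOf_bddAbove ν hν G),
      fun F a hF ha => capOf_usc ν hν F a hF ha⟩,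
      fun A B _ _ => capOf_union ν hν A B⟩, ?_⟩
    intro φ
    have hcongr : ∀ x : X, ((φ x : ℝ) : EReal) + myLog (capOf ν {x})
        = ((φ x : ℝ) : EReal) + dens ν x := by
      intro x; rw [myLog_capOf_singleton ν hν]
    have hseq : (⨆ x : X, ((φ x : EReal) + myLog (capOf ν {x})))
        = ⨆ x : X, (((φ x : ℝ) : EReal) + dens ν x) := iSup_congr hcongr
    constructor
    · rw [hseq]; exact nu_rep ν hν φ
    · obtain ⟨x₀, hx₀⟩ := nu_rep_attain ν hν φ
      refine ⟨x₀, ?_⟩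
      rw [hseq, ← nu_rep ν hν φ, hx₀, hcongr x₀]
  · rintro ⟨c, hc, hrep⟩
    set L : X → EReal := fun x => myLog (c {x}) with hL
    have hXne : Nonempty X := ⟨(hrep 1).2.choose⟩
    have hL0 : ∀ x, L x ≤ 0 := by
      intro x
      exact myLog_nonpos (hc.1.2.2.1 {x} isClosed_singleton).2
    have hattain : ∀ φ : C(X,ℝ), ∃ x₀ : X,
        ((ν φ : ℝ) : EReal) = ((φ x₀ : ℝ) : EReal) + L x₀ := by
      intro φ
      obtain ⟨x₀, h2⟩ := (hrep φ).2
      exact ⟨x₀, (hrep φ).1.trans h2⟩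
    have hle : ∀ (φ : C(X,ℝ)) (x : X),
        ((φ x : ℝ) : EReal) + L x ≤ ((ν φ : ℝ) : EReal) := by
      intro φ x
      rw [(hrep φ).1]
      exact le_iSup (fun x : X => ((φ x : ℝ) : EReal) + L x) x
    refine ⟨?_, ?_, ?_⟩
    · -- ν 1 = 1
      have h1le : ((ν (1:C(X,ℝ)) : ℝ) : EReal) ≤ ((1:ℝ) : EReal) := by
        rw [(hrep 1).1]
        refine iSup_le fun x => ?_
        have : ((1:C(X,ℝ)) x : ℝ) = (1:ℝ) := rfl
        rw [this]
        calc ((1:ℝ) : EReal) + L x ≤ ((1:ℝ) : EReal) + 0 := add_le_add_right (hL0 x) _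
          _ = ((1:ℝ) : EReal) := add_zero _
      have h1ge : ((1:ℝ) : EReal) ≤ ((ν (1:C(X,ℝ)) : ℝ) : EReal) := by
        by_contra hcon
        push_neg at hcon
        have hu : ν (1:C(X,ℝ)) < 1 := by exact_mod_cast hcon
        set u : ℝ := ν (1:C(X,ℝ)) with husel
        have hexplt : Real.exp (u - 1) < 1 := Real.exp_lt_one_iff.2 (by linarith)
        obtain ⟨x, hx⟩ := poss_sup_singletons hc (show (0:ℝ) < 1 - Real.exp (u-1) by linarith)
        have hcx : Real.exp (u-1) < c {x} := by linarith
        have hcxpos : 0 < c {x} := lt_trans (Real.exp_pos _) hcx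
        have hLx : L x = ((Real.log (c {x}) : ℝ) : EReal) := by
          rw [hL]; dsimp only; rw [myLog, if_neg (not_le.2 hcxpos)]
        have hlog : u - 1 < Real.log (c {x}) := by
          have := Real.log_lt_log (Real.exp_pos _) hcx
          rwa [Real.log_exp] at this
        have hterm : (u : EReal) < ((1:C(X,ℝ)) x : ℝ) + L x := by
          have : ((1:C(X,ℝ)) x : ℝ) = (1:ℝ) := rfl
          rw [this, hLx]
          have : (u:ℝ) < 1 + Real.log (c {x}) := by linarith
          exact_mod_cast this
        exact absurd (lt_of_lt_of_le hterm (hle 1 x)) (lt_irrefl _)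
      have : ((ν (1:C(X,ℝ)) : ℝ) : EReal) = ((1:ℝ) : EReal) := le_antisymm h1le h1ge
      exact_mod_cast this
    · -- translation
      intro l φ
      obtain ⟨x₀, h0⟩ := hattain (ContinuousMap.const X l + φ)
      obtain ⟨x₁, h1⟩ := hattain φ
      have happ : ((ContinuousMap.const X l + φ) x₀ : ℝ) = l + φ x₀ := by simp
      have hle1 : ((ν (ContinuousMap.const X l + φ) : ℝ) : EReal)
          ≤ ((l + ν φ : ℝ) : EReal) := by
        rw [h0, happ]
        calc ((l + φ x₀ : ℝ) : EReal) + L x₀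
            = (l : EReal) + (((φ x₀ : ℝ) : EReal) + L x₀) := by
              rw [EReal.coe_add, add_assoc]
          _ ≤ (l : EReal) + ((ν φ : ℝ) : EReal) := add_le_add_right (hle φ x₀) _
          _ = ((l + ν φ : ℝ) : EReal) := by rw [← EReal.coe_add]
      have hge1 : ((l + ν φ : ℝ) : EReal)
          ≤ ((ν (ContinuousMap.const X l + φ) : ℝ) : EReal) := by
        have happ1 : ((ContinuousMap.const X l + φ) x₁ : ℝ) = l + φ x₁ := by simp
        calc ((l + ν φ : ℝ) : EReal) = (l : EReal) + ((ν φ : ℝ) : EReal) := by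
              rw [← EReal.coe_add]
          _ = (l : EReal) + (((φ x₁ : ℝ) : EReal) + L x₁) := by rw [h1]
          _ = (((ContinuousMap.const X l + φ) x₁ : ℝ) : EReal) + L x₁ := by
              rw [happ1, EReal.coe_add, add_assoc]
          _ ≤ _ := hle _ x₁
      have : ((ν (ContinuousMap.const X l + φ) : ℝ) : EReal) = ((l + ν φ : ℝ) : EReal) :=
        le_antisymm hle1 hge1
      exact_mod_cast this
    · -- max
      intro ψ φ
      obtain ⟨x₀, h0⟩ := hattain (ψ ⊔ φ)
      have hsup0 : ((ψ ⊔ φ) x₀ : ℝ) = max (ψ x₀) (φ x₀) := rfl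
      have hle1 : ν (ψ ⊔ φ) ≤ max (ν ψ) (ν φ) := by
        rcases le_total (ψ x₀) (φ x₀) with hc0 | hc0
        · have : ((ν (ψ ⊔ φ) : ℝ) : EReal) ≤ ((ν φ : ℝ) : EReal) := by
            rw [h0, hsup0, max_eq_right hc0]
            exact hle φ x₀
          have : ν (ψ ⊔ φ) ≤ ν φ := by exact_mod_cast this
          exact le_trans this (le_max_right _ _)
        · have : ((ν (ψ ⊔ φ) : ℝ) : EReal) ≤ ((ν ψ : ℝ) : EReal) := by
            rw [h0, hsup0, max_eq_left hc0]
            exact hle ψ x₀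
          have : ν (ψ ⊔ φ) ≤ ν ψ := by exact_mod_cast this
          exact le_trans this (le_max_left _ _)
      have hge1 : max (ν ψ) (ν φ) ≤ ν (ψ ⊔ φ) := by
        have key : ∀ ξ : C(X,ℝ), ξ ≤ ψ ⊔ φ → ν ξ ≤ ν (ψ ⊔ φ) := by
          intro ξ hξ
          obtain ⟨x₁, h1⟩ := hattain ξ
          have : ((ν ξ : ℝ) : EReal) ≤ ((ν (ψ ⊔ φ) : ℝ) : EReal) := by
            rw [h1]
            refine le_trans ?_ (hle (ψ ⊔ φ) x₁)
            have : (ξ x₁ : ℝ) ≤ ((ψ ⊔ φ) x₁ : ℝ) := hξ x₁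
            exact add_le_add_left (by exact_mod_cast this) _
          exact_mod_cast this
        exact max_le (key ψ le_sup_left) (key φ le_sup_right)
      exact le_antisymm hle1 hge1
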